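/- Koksma's inequality: for any function f : [0,1] → ℝ of bounded variation V(f) and any points x_1,...,x_k ∈ [0,1], the integration error satisfies | (1/k)∑_{i=1}^k f(x_i) − ∫_0^1 f(u) du | ≤ V(f) · D_k(x), where D_k(x) is the star discrepancy of the point set. -/

import Mathlib

open scoped BigOperators

open scoped BigOperators
open MeasureTheory Set Finset

open scoped Classical in
noncomputable def KoksmaDisc (k : ℕ) (x : Fin k → ℝ) : ℝ :=
  ⨆ u : Set.Icc (0:ℝ) 1, |(Nat.card {i : Fin k // x i < (u : ℝ)} : ℝ) / k - (u : ℝ)|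

open scoped Classical

lemma koksma_card_eq {k : ℕ} (x : Fin k → ℝ) (u : ℝ) :
    (Nat.card {i : Fin k // x i < u} : ℝ) = #(filter (fun i => x i < u) Finset.univ) := by
  rw [Nat.card_eq_fintype_card, Fintype.card_subtype]

lemma koksma_bdd {k : ℕ} (x : Fin k → ℝ) :
    BddAbove (Set.range fun u : Set.Icc (0:ℝ) 1 =>
      |(Nat.card {i : Fin k // x i < (u : ℝ)} : ℝ) / k - (u : ℝ)|) := by
  refine ⟨2, ?_⟩
  rintro _ ⟨u, rfl⟩
  have h1 : (Nat.card {i : Fin k // x i < (u : ℝ)} : ℝ) / k ≤ 1 := by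
    rcases Nat.eq_zero_or_pos k with hk | hk
    · subst hk; simp
    · rw [div_le_one (by positivity)]
      have : Nat.card {i : Fin k // x i < (u : ℝ)} ≤ k := by
        simpa using Nat.card_le_card_of_injective _ (Subtype.val_injective (p := fun i => x i < (u:ℝ)))
      exact_mod_cast this
  have h2 : (0:ℝ) ≤ (Nat.card {i : Fin k // x i < (u : ℝ)} : ℝ) / k := by positivity
  have hu := u.2
  rw [abs_sub_le_iff]
  constructor <;> nlinarith [hu.1, hu.2]

lemma koksma_lt_bound {k : ℕ} (x : Fin k → ℝ) {c : ℝ} (hc : c ∈ Set.Icc (0:ℝ) 1) :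
    |(#(filter (fun i => x i < c) Finset.univ) : ℝ) / k - c| ≤ KoksmaDisc k x := by
  have := le_ciSup (koksma_bdd x) (⟨c, hc⟩ : Set.Icc (0:ℝ) 1)
  rw [koksma_card_eq] at this
  exact this

lemma koksma_disc_nonneg {k : ℕ} (x : Fin k → ℝ) (hx : ∀ i, x i ∈ Set.Icc (0:ℝ) 1) :
    0 ≤ KoksmaDisc k x := by
  have h := koksma_lt_bound x (c := 0) (by simp)
  have : filter (fun i => x i < (0:ℝ)) Finset.univ = ∅ := by
    apply Finset.filter_false_of_mem
    intro i _
    exact not_lt.2 (hx i).1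
  rw [this] at h
  simpa using le_trans (abs_nonneg _) h

lemma koksma_le_bound {k : ℕ} (hk : 0 < k) (x : Fin k → ℝ) (hx : ∀ i, x i ∈ Set.Icc (0:ℝ) 1)
    {c : ℝ} (hc : c ∈ Set.Icc (0:ℝ) 1) :
    (#(filter (fun i => x i ≤ c) Finset.univ) : ℝ) / k - c ≤ KoksmaDisc k x := by
  rcases eq_or_lt_of_le hc.2 with h1 | h1
  · -- c = 1
    have : filter (fun i => x i ≤ c) Finset.univ = Finset.univ := by
      apply Finset.filter_true_of_mem
      intro i _; rw [h1]; exact (hx i).2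
    rw [this, h1]
    simp only [Finset.card_univ, Fintype.card_fin]
    rw [div_self (by positivity)]
    simpa using koksma_disc_nonneg x hx
  · refine le_of_forall_pos_le_add ?_
    intro ε hε
    set u := min (c + ε) 1 with hu
    have hcu : c < u := lt_min (by linarith) h1
    have huI : u ∈ Set.Icc (0:ℝ) 1 := ⟨le_trans hc.1 hcu.le, min_le_right _ _⟩
    have hsub : filter (fun i => x i ≤ c) Finset.univ ⊆ filter (fun i => x i < u) Finset.univ := by
      intro i hi
      simp only [Finset.mem_filter] at hi ⊢
      exact ⟨hi.1, lt_of_le_of_lt hi.2 hcu⟩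
    have hcard : (#(filter (fun i => x i ≤ c) Finset.univ) : ℝ)
        ≤ #(filter (fun i => x i < u) Finset.univ) := by
      exact_mod_cast Finset.card_le_card hsub
    have hb := koksma_lt_bound x huI
    have huc : u - c ≤ ε := by
      have := min_le_left (c + ε) 1
      simp only [hu] at *
      linarith
    have hk' : (0:ℝ) < k := by exact_mod_cast hk
    have := (abs_le.mp hb).2
    calc (#(filter (fun i => x i ≤ c) Finset.univ) : ℝ) / k - c
        ≤ (#(filter (fun i => x i < u) Finset.univ) : ℝ) / k - c := by
          gcongr
      _ = ((#(filter (fun i => x i < u) Finset.univ) : ℝ) / k - u) + (u - c) := by ring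
      _ ≤ KoksmaDisc k x + ε := add_le_add this huc

lemma koksma_pointwise {k : ℕ} (hk : 0 < k) {g : ℝ → ℝ} (hg : Monotone g) (x : Fin k → ℝ)
    (hx : ∀ i, x i ∈ Set.Icc (0:ℝ) 1) (t : ℝ) :
    |(1 / (k:ℝ)) * ∑ i, (if t < g (x i) then (1:ℝ) else 0)
      - ∫ u in Set.Ioc (0:ℝ) 1, (if t < g u then (1:ℝ) else 0)| ≤ KoksmaDisc k x := by
  have hk' : (0:ℝ) < k := by exact_mod_cast hk
  have hmeas : MeasurableSet {u : ℝ | t < g u} :=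
    measurableSet_lt measurable_const hg.measurable
  have hM : (∫ u in Set.Ioc (0:ℝ) 1, (if t < g u then (1:ℝ) else 0))
      = (volume (Set.Ioc (0:ℝ) 1 ∩ {u : ℝ | t < g u})).toReal := by
    have : (fun u : ℝ => (if t < g u then (1:ℝ) else 0))
        = Set.indicator {u : ℝ | t < g u} (fun _ => (1:ℝ)) := by
      ext u; simp [Set.indicator_apply, Set.mem_setOf_eq]
    rw [this, MeasureTheory.setIntegral_indicator hmeas]
    simp [MeasureTheory.setIntegral_const]
    rfl
  have hsum : (∑ i, (if t < g (x i) then (1:ℝ) else 0))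
      = (#(filter (fun i => t < g (x i)) Finset.univ) : ℝ) := by
    exact_mod_cast Finset.sum_boole (fun i => t < g (x i)) Finset.univ
  set T : Set ℝ := {u : ℝ | u ∈ Set.Icc (0:ℝ) 1 ∧ t < g u} with hT
  rcases T.eq_empty_or_nonempty with hTe | hne
  · -- T empty
    have hfe : filter (fun i => t < g (x i)) Finset.univ = ∅ := by
      apply Finset.filter_false_of_mem
      intro i _
      intro h
      have hmem : x i ∈ T := ⟨hx i, h⟩
      rw [hTe] at hmem
      exact hmem
    have hSe : Set.Ioc (0:ℝ) 1 ∩ {u : ℝ | t < g u} = ∅ := by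
      rw [Set.eq_empty_iff_forall_notMem]
      rintro u ⟨hu1, hu2⟩
      have hmem : u ∈ T := ⟨⟨hu1.1.le, hu1.2⟩, hu2⟩
      rw [hTe] at hmem
      exact hmem
    rw [hM, hsum, hfe, hSe]
    simpa using koksma_disc_nonneg x hx
  · set c := sInf T with hc
    have hbdd : BddBelow T := ⟨0, fun u hu => hu.1.1⟩
    have hc0 : 0 ≤ c := le_csInf hne fun u hu => hu.1.1
    have hc1 : c ≤ 1 := by
      obtain ⟨u0, hu0⟩ := hne
      exact le_trans (csInf_le hbdd hu0) hu0.1.2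
    have hup : ∀ u, u ∈ Set.Icc (0:ℝ) 1 → c < u → t < g u := by
      intro u hu hcu
      obtain ⟨v, hv, hvu⟩ := exists_lt_of_csInf_lt hne hcu
      exact lt_of_lt_of_le hv.2 (hg hvu.le)
    have hdown : ∀ u ∈ T, c ≤ u := fun u hu => csInf_le hbdd hu
    -- volume of S
    have hvol : (volume (Set.Ioc (0:ℝ) 1 ∩ {u : ℝ | t < g u})).toReal = 1 - c := by
      have hsub1 : Set.Ioc c 1 ⊆ Set.Ioc (0:ℝ) 1 ∩ {u : ℝ | t < g u} := by
        rintro u ⟨hu1, hu2⟩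
        exact ⟨⟨lt_of_le_of_lt hc0 hu1, hu2⟩,
          hup u ⟨le_of_lt (lt_of_le_of_lt hc0 hu1), hu2⟩ hu1⟩
      have hsub2 : Set.Ioc (0:ℝ) 1 ∩ {u : ℝ | t < g u} ⊆ Set.Icc c 1 := by
        rintro u ⟨hu1, hu2⟩
        exact ⟨hdown u ⟨⟨hu1.1.le, hu1.2⟩, hu2⟩, hu1.2⟩
      have h1 := measure_mono (μ := volume) hsub1
      have h2 := measure_mono (μ := volume) hsub2
      rw [Real.volume_Ioc] at h1
      rw [Real.volume_Icc] at h2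
      have : volume (Set.Ioc (0:ℝ) 1 ∩ {u : ℝ | t < g u}) = ENNReal.ofReal (1 - c) :=
        le_antisymm h2 h1
      rw [this, ENNReal.toReal_ofReal (by linarith)]
    rw [hM, hsum, hvol]
    by_cases hcT : t < g c
    · -- c is attained
      have hfilter : filter (fun i => t < g (x i)) Finset.univ
          = filter (fun i => c ≤ x i) Finset.univ := by
        apply Finset.filter_congr
        intro i _
        constructor
        · intro h; exact hdown (x i) ⟨hx i, h⟩
        · intro h; exact lt_of_lt_of_le hcT (hg h)
      have hsplit : #(filter (fun i => x i < c) Finset.univ)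
          + #(filter (fun i => c ≤ x i) Finset.univ) = k := by
        have := Finset.card_filter_add_card_filter_not
          (s := Finset.univ) (p := fun i : Fin k => x i < c)
        simpa [not_lt] using this
      have hsplit' : (#(filter (fun i => c ≤ x i) Finset.univ) : ℝ)
          = k - #(filter (fun i => x i < c) Finset.univ) := by
        have := congrArg (Nat.cast (R := ℝ)) hsplit
        push_cast at this
        linarith
      rw [hfilter, hsplit']
      have heq : (1 / (k:ℝ)) * ((k:ℝ) - #(filter (fun i => x i < c) Finset.univ)) - (1 - c)
          = -((#(filter (fun i => x i < c) Finset.univ) : ℝ) / k - c) := by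
        field_simp
        ring
      rw [heq, abs_neg]
      exact koksma_lt_bound x ⟨hc0, hc1⟩
    · -- c not attained
      have hfilter : filter (fun i => t < g (x i)) Finset.univ
          = filter (fun i => c < x i) Finset.univ := by
        apply Finset.filter_congr
        intro i _
        constructor
        · intro h
          rcases lt_or_eq_of_le (hdown (x i) ⟨hx i, h⟩) with h' | h'
          · exact h'
          · exact absurd (h' ▸ h) hcT
        · intro h; exact hup (x i) (hx i) h
      have hsplit : #(filter (fun i => x i ≤ c) Finset.univ)
          + #(filter (fun i => c < x i) Finset.univ) = k := by
        have := Finset.card_filter_add_card_filter_not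
          (s := Finset.univ) (p := fun i : Fin k => x i ≤ c)
        simpa [not_le] using this
      have hsplit' : (#(filter (fun i => c < x i) Finset.univ) : ℝ)
          = k - #(filter (fun i => x i ≤ c) Finset.univ) := by
        have := congrArg (Nat.cast (R := ℝ)) hsplit
        push_cast at this
        linarith
      rw [hfilter, hsplit']
      have heq : (1 / (k:ℝ)) * ((k:ℝ) - #(filter (fun i => x i ≤ c) Finset.univ)) - (1 - c)
          = c - (#(filter (fun i => x i ≤ c) Finset.univ) : ℝ) / k := by
        field_simp
        ring
      rw [heq, abs_le]
      constructor
      · have := koksma_le_bound hk x hx (c := c) ⟨hc0, hc1⟩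
        linarith
      · have hmono : (#(filter (fun i => x i < c) Finset.univ) : ℝ)
            ≤ #(filter (fun i => x i ≤ c) Finset.univ) := by
          exact_mod_cast Finset.card_le_card (by
            intro i hi
            simp only [Finset.mem_filter] at hi ⊢
            exact ⟨hi.1, hi.2.le⟩)
        have hb := (abs_le.mp (koksma_lt_bound x (c := c) ⟨hc0, hc1⟩)).1
        have : c - (#(filter (fun i => x i < c) Finset.univ) : ℝ) / k ≤ KoksmaDisc k x := by
          linarith
        have hdiv : (#(filter (fun i => x i < c) Finset.univ) : ℝ) / k
            ≤ (#(filter (fun i => x i ≤ c) Finset.univ) : ℝ) / k := by gcongr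
        linarith

lemma koksma_mono {k : ℕ} (hk : 0 < k) {g : ℝ → ℝ} (hg : Monotone g) (x : Fin k → ℝ)
    (hx : ∀ i, x i ∈ Set.Icc (0:ℝ) 1) :
    |(1 / (k:ℝ)) * ∑ i, g (x i) - ∫ u in (0:ℝ)..1, g u|
      ≤ (g 1 - g 0) * KoksmaDisc k x := by
  have hk' : (0:ℝ) < k := by exact_mod_cast hk
  set a := g 0 with ha
  set b := g 1 with hb
  have hab : a ≤ b := hg zero_le_one
  set F : ℝ → ℝ → ℝ := fun u t => if t < g u then (1:ℝ) else 0 with hF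
  -- layer cake representation of g on [0,1]
  have claimA : ∀ u ∈ Set.Icc (0:ℝ) 1, g u = a + ∫ t in Set.Ioc a b, F u t := by
    intro u hu
    have hga : a ≤ g u := hg hu.1
    have hgb : g u ≤ b := hg hu.2
    have hind : (fun t => F u t) = Set.indicator (Set.Iio (g u)) (fun _ => (1:ℝ)) := by
      ext t
      simp [hF, Set.indicator_apply, Set.mem_Iio]
    rw [hind, MeasureTheory.setIntegral_indicator measurableSet_Iio]
    have hinter : Set.Ioc a b ∩ Set.Iio (g u) = Set.Ioo a (g u) := by
      ext t
      simp only [Set.mem_inter_iff, Set.mem_Ioc, Set.mem_Iio, Set.mem_Ioo]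
      constructor
      · rintro ⟨⟨h1, _⟩, h2⟩; exact ⟨h1, h2⟩
      · rintro ⟨h1, h2⟩; exact ⟨⟨h1, le_trans h2.le hgb⟩, h2⟩
    rw [hinter]
    simp only [MeasureTheory.setIntegral_const, smul_eq_mul, mul_one, Real.volume_Ioo]
    rw [Measure.real, Real.volume_Ioo, ENNReal.toReal_ofReal (by linarith)]
    ring
  -- integrability facts
  have hFint : ∀ u : ℝ, IntegrableOn (fun t => F u t) (Set.Ioc a b) volume := by
    intro u
    have : (fun t => F u t) = Set.indicator (Set.Iio (g u)) (fun _ => (1:ℝ)) := by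
      ext t; simp [hF, Set.indicator_apply, Set.mem_Iio]
    rw [this]
    exact (MeasureTheory.integrableOn_const measure_Ioc_lt_top.ne).indicator
      measurableSet_Iio
  have hFmeas : Measurable (Function.uncurry F) := by
    exact Measurable.ite (measurableSet_lt measurable_snd (hg.measurable.comp measurable_fst))
      measurable_const measurable_const
  have hprod : Integrable (Function.uncurry F)
      ((volume.restrict (Set.Ioc (0:ℝ) 1)).prod (volume.restrict (Set.Ioc a b))) := by
    refine MeasureTheory.Integrable.mono' (integrable_const 1)
      hFmeas.aestronglyMeasurable (Filter.Eventually.of_forall ?_)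
    rintro ⟨u, t⟩
    simp only [Function.uncurry, hF, Real.norm_eq_abs]
    split <;> simp
  -- step 2: the sum
  have step2 : (1 / (k:ℝ)) * ∑ i, g (x i)
      = a + ∫ t in Set.Ioc a b, (1 / (k:ℝ)) * ∑ i, F (x i) t := by
    have h1 : ∑ i, g (x i) = ∑ i, (a + ∫ t in Set.Ioc a b, F (x i) t) :=
      Finset.sum_congr rfl fun i _ => claimA (x i) (hx i)
    have h2 : ∑ i, (a + ∫ t in Set.Ioc a b, F (x i) t)
        = (k:ℝ) * a + ∫ t in Set.Ioc a b, ∑ i, F (x i) t := by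
      rw [Finset.sum_add_distrib, Finset.sum_const, Finset.card_univ, Fintype.card_fin,
        MeasureTheory.integral_finset_sum Finset.univ (fun i _ => hFint (x i))]
      simp [nsmul_eq_mul]
    rw [h1, h2, mul_add, ← MeasureTheory.integral_const_mul]
    congr 1
    field_simp
  -- step 3: the integral, using Fubini
  have step3 : (∫ u in (0:ℝ)..1, g u)
      = a + ∫ t in Set.Ioc a b, ∫ u in Set.Ioc (0:ℝ) 1, F u t := by
    rw [intervalIntegral.integral_of_le zero_le_one]
    have h1 : (∫ u in Set.Ioc (0:ℝ) 1, g u)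
        = ∫ u in Set.Ioc (0:ℝ) 1, (a + ∫ t in Set.Ioc a b, F u t) :=
      MeasureTheory.setIntegral_congr_fun measurableSet_Ioc
        fun u hu => claimA u ⟨hu.1.le, hu.2⟩
    have hint : Integrable (fun u => ∫ t in Set.Ioc a b, F u t)
        (volume.restrict (Set.Ioc (0:ℝ) 1)) := hprod.integral_prod_left
    rw [h1, MeasureTheory.integral_add (integrable_const a) hint]
    congr 1
    · simp [Real.volume_Ioc]
    · exact MeasureTheory.integral_integral_swap hprod
  -- step 4: difference as a single integral
  have hNint : Integrable (fun t => (1 / (k:ℝ)) * ∑ i, F (x i) t)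
      (volume.restrict (Set.Ioc a b)) :=
    (integrable_finset_sum Finset.univ (fun i _ => hFint (x i))).const_mul _
  have hMint : Integrable (fun t => ∫ u in Set.Ioc (0:ℝ) 1, F u t)
      (volume.restrict (Set.Ioc a b)) := hprod.integral_prod_right
  have step4 : (1 / (k:ℝ)) * ∑ i, g (x i) - ∫ u in (0:ℝ)..1, g u
      = ∫ t in Set.Ioc a b,
          ((1 / (k:ℝ)) * ∑ i, F (x i) t - ∫ u in Set.Ioc (0:ℝ) 1, F u t) := by
    rw [step2, step3, MeasureTheory.integral_sub hNint hMint]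
    ring
  rw [step4]
  have hbound := MeasureTheory.norm_setIntegral_le_of_norm_le_const (μ := volume)
    (s := Set.Ioc a b) (C := KoksmaDisc k x)
    (f := fun t => (1 / (k:ℝ)) * ∑ i, F (x i) t - ∫ u in Set.Ioc (0:ℝ) 1, F u t)
    measure_Ioc_lt_top
    (fun t _ => by
      rw [Real.norm_eq_abs]
      exact koksma_pointwise hk hg x hx t)
  rw [Real.norm_eq_abs] at hbound
  calc |∫ t in Set.Ioc a b,
          ((1 / (k:ℝ)) * ∑ i, F (x i) t - ∫ u in Set.Ioc (0:ℝ) 1, F u t)|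
      ≤ KoksmaDisc k x * (volume (Set.Ioc a b)).toReal := hbound
    _ = (b - a) * KoksmaDisc k x := by
        rw [Real.volume_Ioc, ENNReal.toReal_ofReal (by linarith)]
        ring


/-- Koksma's inequality: for any `f : [0,1] → ℝ` of bounded variation `V(f)` and points
`x 1, …, x k ∈ [0,1]`, `|(1/k) ∑ i, f (x i) − ∫_0^1 f| ≤ V(f) · D_k(x)`, where `D_k(x)`
is the star discrepancy `sup_{u ∈ [0,1]} |#{i : x i < u}/k − u|`. -/
theorem koksma_inequality (k : ℕ) (hk : 0 < k) (f : ℝ → ℝ)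
    (hf : BoundedVariationOn f (Set.Icc 0 1))
    (x : Fin k → ℝ) (hx : ∀ i, x i ∈ Set.Icc (0:ℝ) 1) :
    |(1 / (k : ℝ)) * ∑ i, f (x i) - ∫ u in (0:ℝ)..1, f u|
      ≤ (eVariationOn f (Set.Icc 0 1)).toReal *
        ⨆ u : Set.Icc (0:ℝ) 1,
          |(Nat.card {i : Fin k // x i < (u : ℝ)} : ℝ) / k - (u : ℝ)| := by
  show _ ≤ (eVariationOn f (Set.Icc 0 1)).toReal * KoksmaDisc k x
  have hloc : LocallyBoundedVariationOn f (Set.Icc 0 1) := hf.locallyBoundedVariationOn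
  set τ : ℝ → ℝ := fun u => max 0 (min u 1) with hτ
  have hτmono : Monotone τ := fun u w h => max_le_max le_rfl (min_le_min h le_rfl)
  have hτmem : ∀ u, τ u ∈ Set.Icc (0:ℝ) 1 :=
    fun u => ⟨le_max_left _ _, max_le zero_le_one (min_le_right _ _)⟩
  have hτid : ∀ u ∈ Set.Icc (0:ℝ) 1, τ u = u := by
    intro u hu
    simp [hτ, min_eq_left hu.2, max_eq_right hu.1]
  set v : ℝ → ℝ := fun c => variationOnFromTo f (Set.Icc 0 1) 0 c with hv
  have h01 : (0:ℝ) ∈ Set.Icc (0:ℝ) 1 := by norm_num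
  have h11 : (1:ℝ) ∈ Set.Icc (0:ℝ) 1 := by norm_num
  have hvar : ∀ s r : ℝ, s ∈ Set.Icc (0:ℝ) 1 → r ∈ Set.Icc (0:ℝ) 1 → s ≤ r →
      |f r - f s| ≤ v r - v s := by
    intro s r hs hr hsr
    have hadd := variationOnFromTo.add hloc h01 hs hr
    have heq := variationOnFromTo.eq_of_le f (Set.Icc (0:ℝ) 1) hsr
    have hbv : BoundedVariationOn f (Set.Icc (0:ℝ) 1 ∩ Set.Icc s r) :=
      hf.mono Set.inter_subset_left
    have hd := hbv.dist_le (x := r) (y := s) ⟨hr, ⟨hsr, le_rfl⟩⟩ ⟨hs, ⟨le_rfl, hsr⟩⟩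
    rw [Real.dist_eq] at hd
    have : v r - v s = variationOnFromTo f (Set.Icc 0 1) s r := by
      simp only [hv]; linarith
    rw [this, heq]
    exact hd
  set p : ℝ → ℝ := fun u => (v (τ u) + f (τ u)) / 2 with hp
  set q : ℝ → ℝ := fun u => (v (τ u) - f (τ u)) / 2 with hq
  have hpmono : Monotone p := by
    intro u w h
    have h2 := hvar (τ u) (τ w) (hτmem u) (hτmem w) (hτmono h)
    have := (abs_le.mp h2).1
    simp only [hp]
    linarith
  have hqmono : Monotone q := by
    intro u w h
    have h2 := hvar (τ u) (τ w) (hτmem u) (hτmem w) (hτmono h)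
    have := (abs_le.mp h2).2
    simp only [hq]
    linarith
  have hτ0 : τ 0 = 0 := hτid 0 h01
  have hτ1 : τ 1 = 1 := hτid 1 h11
  have hv0 : v 0 = 0 := variationOnFromTo.self f (Set.Icc 0 1) 0
  have hv1 : v 1 = (eVariationOn f (Set.Icc 0 1)).toReal := by
    simp only [hv]
    rw [variationOnFromTo.eq_of_le f (Set.Icc (0:ℝ) 1) zero_le_one, Set.inter_self]
  have hpq : ∀ u ∈ Set.Icc (0:ℝ) 1, f u = p u - q u := by
    intro u hu
    simp only [hp, hq, hτid u hu]
    ring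
  -- integrability
  have hpint : IntervalIntegrable p volume 0 1 :=
    (hpmono.monotoneOn _).intervalIntegrable
  have hqint : IntervalIntegrable q volume 0 1 :=
    (hqmono.monotoneOn _).intervalIntegrable
  have hfint_eq : (∫ u in (0:ℝ)..1, f u) = (∫ u in (0:ℝ)..1, p u) - ∫ u in (0:ℝ)..1, q u := by
    rw [← intervalIntegral.integral_sub hpint hqint]
    apply intervalIntegral.integral_congr
    intro u hu
    rw [Set.uIcc_of_le zero_le_one] at hu
    exact hpq u hu
  have hsum_eq : (1 / (k:ℝ)) * ∑ i, f (x i)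
      = (1 / (k:ℝ)) * ∑ i, p (x i) - (1 / (k:ℝ)) * ∑ i, q (x i) := by
    rw [← mul_sub, ← Finset.sum_sub_distrib]
    congr 1
    exact Finset.sum_congr rfl fun i _ => hpq (x i) (hx i)
  have hEp := koksma_mono hk hpmono x hx
  have hEq := koksma_mono hk hqmono x hx
  have hsumV : (p 1 - p 0) + (q 1 - q 0) = (eVariationOn f (Set.Icc 0 1)).toReal := by
    simp only [hp, hq, hτ0, hτ1, hv0]
    rw [← hv1]
    ring
  calc |(1 / (k:ℝ)) * ∑ i, f (x i) - ∫ u in (0:ℝ)..1, f u|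
      = |((1 / (k:ℝ)) * ∑ i, p (x i) - ∫ u in (0:ℝ)..1, p u)
          - ((1 / (k:ℝ)) * ∑ i, q (x i) - ∫ u in (0:ℝ)..1, q u)| := by
        rw [hsum_eq, hfint_eq]; congr 1; ring
    _ ≤ |(1 / (k:ℝ)) * ∑ i, p (x i) - ∫ u in (0:ℝ)..1, p u|
          + |(1 / (k:ℝ)) * ∑ i, q (x i) - ∫ u in (0:ℝ)..1, q u| := abs_sub _ _
    _ ≤ (p 1 - p 0) * KoksmaDisc k x + (q 1 - q 0) * KoksmaDisc k x := add_le_add hEp hEq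
    _ = (eVariationOn f (Set.Icc 0 1)).toReal * KoksmaDisc k x := by
        rw [← add_mul, hsumV]
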